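/- Let n ≥ 1, let p > 0 be a real number, let a < b be reals, and let γ, η : ℝ → EuclideanSpace ℝ (Fin n) be smooth maps such that γ''(s) ≠ 0 for all s ∈ [a, b] and η(a) = η(b) = 0, η'(a) = η'(b) = 0. Set w(s) = ‖γ''(s)‖^{p-2}·γ''(s). Then the function t ↦ (1/p)·∫_a^b ‖γ''(s) + t·η''(s)‖^p ds is differentiable at t = 0 with derivative ∫_a^b ⟨η(s), w''(s)⟩ ds. -/

import Mathlib

open Set MeasureTheory intervalIntegral Metric

set_option maxHeartbeats 1000000


/-- First variation of the `p`-bienergy in Euclidean space: for a variation `γ + tη` with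
`η`, `η'` vanishing at the endpoints, the derivative at `t = 0` of
`t ↦ (1/p)∫_a^b ‖γ'' + tη''‖^p` equals `∫_a^b ⟨η, w''⟩` where `w = ‖γ''‖^{p−2} γ''`. -/
theorem stmt_19 (n : ℕ) (hn : 1 ≤ n) (p : ℝ) (hp : 0 < p) (a b : ℝ) (hab : a < b)
    (γ η : ℝ → EuclideanSpace ℝ (Fin n))
    (hγ : ContDiff ℝ (⊤ : ℕ∞) γ) (hη : ContDiff ℝ (⊤ : ℕ∞) η)
    (hne : ∀ s ∈ Set.Icc a b, deriv (deriv γ) s ≠ 0)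
    (hηa : η a = 0) (hηb : η b = 0) (hηa' : deriv η a = 0) (hηb' : deriv η b = 0)
    (w : ℝ → EuclideanSpace ℝ (Fin n))
    (hw : w = fun s => ‖deriv (deriv γ) s‖ ^ (p - 2) • deriv (deriv γ) s) :
    HasDerivAt
      (fun t : ℝ => (1 / p) * ∫ s in a..b, ‖deriv (deriv γ) s + t • deriv (deriv η) s‖ ^ p)
      (∫ s in a..b, (inner ℝ (η s) (deriv (deriv w) s) : ℝ)) 0 := by
  set g := deriv (deriv γ) with hgdef
  set q := deriv (deriv η) with hqdef
  -- smoothness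
  have hgc : ContDiff ℝ (⊤ : ℕ∞) g :=
    (contDiff_infty_iff_deriv.mp (contDiff_infty_iff_deriv.mp hγ).2).2
  have hη1 : ContDiff ℝ (⊤ : ℕ∞) (deriv η) := (contDiff_infty_iff_deriv.mp hη).2
  have hqc : ContDiff ℝ (⊤ : ℕ∞) q := (contDiff_infty_iff_deriv.mp hη1).2
  have h1top : ((⊤:ℕ∞) : WithTop ℕ∞) ≠ 0 := by simp
  have hstop : ((⊤:ℕ∞) : WithTop ℕ∞) + 1 ≤ ((⊤:ℕ∞) : WithTop ℕ∞) := by exact_mod_cast le_top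
  -- rpow helper lemmas
  have hfun : ∀ v : EuclideanSpace ℝ (Fin n), (inner ℝ v v : ℝ) ^ (p/2) = ‖v‖ ^ p := by
    intro v
    rw [real_inner_self_eq_norm_sq, ← Real.rpow_natCast (‖v‖) 2,
      ← Real.rpow_mul (norm_nonneg v)]
    push_cast
    rw [show (2:ℝ) * (p/2) = p by ring]
  have hfun2 : ∀ v : EuclideanSpace ℝ (Fin n),
      (inner ℝ v v : ℝ) ^ (p/2 - 1) = ‖v‖ ^ (p - 2) := by
    intro v
    rw [real_inner_self_eq_norm_sq, ← Real.rpow_natCast (‖v‖) 2,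
      ← Real.rpow_mul (norm_nonneg v)]
    ring_nf
  -- open set where g ≠ 0
  set U : Set ℝ := g ⁻¹' {0}ᶜ with hUdef
  have hUopen : IsOpen U := (isOpen_compl_singleton).preimage hgc.continuous
  have hUsub : Icc a b ⊆ U := fun s hs => hne s hs
  have hUg : ∀ s ∈ U, g s ≠ 0 := fun s hs => hs
  -- w is smooth on U
  have hwU : ContDiffOn ℝ (⊤ : ℕ∞) w U := by
    intro s hs
    apply ContDiffAt.contDiffWithinAt
    rw [hw]
    exact ((ContDiffAt.norm (𝕜 := ℝ) hgc.contDiffAt (hUg s hs)).rpow_const_of_ne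
      (norm_ne_zero_iff.mpr (hUg s hs))).smul hgc.contDiffAt
  have hw1U : ContDiffOn ℝ (⊤ : ℕ∞) (deriv w) U := hwU.deriv_of_isOpen hUopen hstop
  have hw2U : ContDiffOn ℝ (⊤ : ℕ∞) (deriv (deriv w)) U := hw1U.deriv_of_isOpen hUopen hstop
  have hwd : ∀ s ∈ U, HasDerivAt w (deriv w s) s := fun s hs =>
    (((hwU.differentiableOn h1top).differentiableAt (hUopen.mem_nhds hs))).hasDerivAt
  have hw1d : ∀ s ∈ U, HasDerivAt (deriv w) (deriv (deriv w) s) s := fun s hs =>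
    (((hw1U.differentiableOn h1top).differentiableAt (hUopen.mem_nhds hs))).hasDerivAt
  have hIcc : uIcc a b = Icc a b := uIcc_of_le hab.le
  have hIccU : uIcc a b ⊆ U := by rw [hIcc]; exact hUsub
  -- integrability helpers
  have hcw : ContinuousOn w (uIcc a b) := (hwU.continuousOn).mono hIccU
  have hcw1 : ContinuousOn (deriv w) (uIcc a b) := (hw1U.continuousOn).mono hIccU
  have hcw2 : ContinuousOn (deriv (deriv w)) (uIcc a b) := (hw2U.continuousOn).mono hIccU
  -- Part B : integration by parts twice
  have iA : IntervalIntegrable (fun s => (inner ℝ (deriv w s) (deriv η s) : ℝ)) volume a b :=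
    (hcw1.inner (hη1.continuous.continuousOn)).intervalIntegrable
  have iB : IntervalIntegrable (fun s => (inner ℝ (w s) (q s) : ℝ)) volume a b :=
    (hcw.inner (hqc.continuous.continuousOn)).intervalIntegrable
  have iC : IntervalIntegrable (fun s => (inner ℝ (deriv (deriv w) s) (η s) : ℝ)) volume a b :=
    (hcw2.inner (hη.continuous.continuousOn)).intervalIntegrable
  have step1 : (∫ s in a..b, ((inner ℝ (w s) (q s) : ℝ) + inner ℝ (deriv w s) (deriv η s)))
      = 0 := by
    rw [integral_eq_sub_of_hasDerivAt (f := fun s => (inner ℝ (w s) (deriv η s) : ℝ))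
      (fun s hs => (hwd s (hIccU hs)).inner ℝ (hη1.differentiable h1top s).hasDerivAt)
      ((iB.add iA).congr ?_)]
    · simp [hηa', hηb']
    · exact fun _ _ => rfl
  have step2 : (∫ s in a..b, ((inner ℝ (deriv w s) (deriv η s) : ℝ)
      + inner ℝ (deriv (deriv w) s) (η s))) = 0 := by
    rw [integral_eq_sub_of_hasDerivAt (f := fun s => (inner ℝ (deriv w s) (η s) : ℝ))
      (fun s hs => (hw1d s (hIccU hs)).inner ℝ (hη.differentiable h1top s).hasDerivAt)
      ((iA.add iC).congr ?_)]
    · simp [hηa, hηb]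
    · exact fun _ _ => rfl
  have partB : (∫ s in a..b, (inner ℝ (w s) (q s) : ℝ))
      = ∫ s in a..b, (inner ℝ (η s) (deriv (deriv w) s) : ℝ) := by
    rw [integral_add iB iA] at step1
    rw [integral_add iA iC] at step2
    have : (∫ s in a..b, (inner ℝ (deriv (deriv w) s) (η s) : ℝ))
        = ∫ s in a..b, (inner ℝ (η s) (deriv (deriv w) s) : ℝ) := by
      simp_rw [real_inner_comm]
    linarith [step1, step2, this ▸ step2]
  -- Part A : differentiation under the integral sign
  have hne' : ∀ s ∈ Icc a b, g s ≠ 0 := hne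
  obtain ⟨s₀, hs₀, hmin⟩ := isCompact_Icc.exists_isMinOn (nonempty_Icc.mpr hab.le)
      (hgc.continuous.norm.continuousOn)
  rw [isMinOn_iff] at hmin
  set m := ‖g s₀‖ with hmdef
  have hm0 : 0 < m := norm_pos_iff.mpr (hne' s₀ hs₀)
  obtain ⟨s₁, hs₁, hmaxq⟩ := isCompact_Icc.exists_isMaxOn (nonempty_Icc.mpr hab.le)
      (hqc.continuous.norm.continuousOn)
  rw [isMaxOn_iff] at hmaxq
  set M := ‖q s₁‖ with hMdef
  have hM0 : (0:ℝ) ≤ M := norm_nonneg _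
  obtain ⟨s₂, hs₂, hmaxg⟩ := isCompact_Icc.exists_isMaxOn (nonempty_Icc.mpr hab.le)
      (hgc.continuous.norm.continuousOn)
  rw [isMaxOn_iff] at hmaxg
  set G := ‖g s₂‖ with hGdef
  have hG0 : (0:ℝ) ≤ G := norm_nonneg _
  set ε := min 1 (m / (2 * (M + 1))) with hεdef
  have hε : 0 < ε := lt_min one_pos (div_pos hm0 (by positivity))
  have hε1 : ε ≤ 1 := min_le_left _ _
  have hε2 : ε ≤ m / (2 * (M + 1)) := min_le_right _ _
  have hxlow : ∀ s ∈ Icc a b, ∀ t ∈ ball (0:ℝ) ε, m/2 ≤ ‖g s + t • q s‖ := by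
    intro s hs t ht
    have h1 : m ≤ ‖g s‖ := hmin s hs
    have h2 : ‖q s‖ ≤ M := hmaxq s hs
    have ht' : |t| < ε := by simpa [Real.dist_eq] using ht
    have key : ‖g s‖ ≤ ‖g s + t • q s‖ + ‖t • q s‖ := norm_le_add_norm_add _ _
    have hts : ‖t • q s‖ ≤ ε * M := by
      rw [norm_smul, Real.norm_eq_abs]
      exact mul_le_mul ht'.le h2 (norm_nonneg _) hε.le
    have hεM : ε * M ≤ m / 2 := by
      have : ε * M ≤ (m / (2 * (M + 1))) * M := mul_le_mul_of_nonneg_right hε2 hM0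
      calc ε * M ≤ (m / (2 * (M + 1))) * M := this
        _ ≤ m / 2 := by
          rw [div_mul_eq_mul_div, div_le_div_iff₀ (by positivity) (by positivity)]
          nlinarith
    linarith
  have hxhigh : ∀ s ∈ Icc a b, ∀ t ∈ ball (0:ℝ) ε, ‖g s + t • q s‖ ≤ G + M := by
    intro s hs t ht
    have ht' : |t| < ε := by simpa [Real.dist_eq] using ht
    calc ‖g s + t • q s‖ ≤ ‖g s‖ + ‖t • q s‖ := norm_add_le _ _
      _ ≤ G + M := by
        have : ‖t • q s‖ ≤ 1 * M := by
          rw [norm_smul, Real.norm_eq_abs]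
          exact mul_le_mul (ht'.le.trans hε1) (hmaxq s hs) (norm_nonneg _) one_pos.le
        have h2 := hmaxg s hs
        simp only [one_mul] at this
        linarith
  have hxne0 : ∀ s ∈ Icc a b, ∀ t ∈ ball (0:ℝ) ε, g s + t • q s ≠ 0 := by
    intro s hs t ht hcon
    have := hxlow s hs t ht
    rw [hcon, norm_zero] at this
    linarith
  set F' : ℝ → ℝ → ℝ := fun t s =>
    p * ((inner ℝ (g s + t • q s) (g s + t • q s) : ℝ) ^ (p/2 - 1))
      * (inner ℝ (g s + t • q s) (q s) : ℝ) with hF'def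
  have hdiff : ∀ s ∈ Icc a b, ∀ t₀ ∈ ball (0:ℝ) ε,
      HasDerivAt (fun t => ‖g s + t • q s‖ ^ p) (F' t₀ s) t₀ := by
    intro s hs t₀ ht₀
    have hx : HasDerivAt (fun t : ℝ => g s + t • q s) (q s) t₀ := by
      simpa using ((hasDerivAt_id t₀).smul_const (q s)).const_add (g s)
    have h0 : g s + t₀ • q s ≠ 0 := hxne0 s hs t₀ ht₀
    have hxne : (inner ℝ (g s + t₀ • q s) (g s + t₀ • q s) : ℝ) ≠ 0 := by
      rw [real_inner_self_eq_norm_sq]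
      exact pow_ne_zero 2 (norm_ne_zero_iff.mpr h0)
    have hin : HasDerivAt (fun t => (inner ℝ (g s + t • q s) (g s + t • q s) : ℝ))
        (2 * (inner ℝ (g s + t₀ • q s) (q s) : ℝ)) t₀ := by
      have h2 := hx.inner ℝ hx
      refine h2.congr_deriv ?_
      rw [real_inner_comm]; ring
    have hcomp := (Real.hasDerivAt_rpow_const (p := p/2) (Or.inl hxne)).comp t₀ hin
    have heq : (fun t : ℝ => ((inner ℝ (g s + t • q s) (g s + t • q s) : ℝ)) ^ (p/2))
        = fun t => ‖g s + t • q s‖ ^ p := funext fun t => hfun _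
    rw [Function.comp_def, heq] at hcomp
    refine hcomp.congr_deriv ?_
    rw [hF'def]; ring
  set C : ℝ := p * ((m/2) ^ (p-1) + (G + M) ^ (p-1)) * M with hCdef
  have hm2 : (0:ℝ) < m/2 := by linarith
  have hrb : ∀ r : ℝ, m/2 ≤ r → r ≤ G + M → r ^ (p-1) ≤ (m/2) ^ (p-1) + (G + M) ^ (p-1) := by
    intro r h1 h2
    rcases le_or_gt 0 (p-1) with hp1 | hp1
    · have ha1 := Real.rpow_le_rpow (le_trans hm2.le h1) h2 hp1
      have ha2 := Real.rpow_nonneg hm2.le (p-1)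
      linarith
    · have ha1 := Real.rpow_le_rpow_of_nonpos hm2 h1 hp1.le
      have ha2 := Real.rpow_nonneg (le_trans (le_trans hm2.le h1) h2) (p-1)
      linarith
  have hbound : ∀ s ∈ Icc a b, ∀ t ∈ ball (0:ℝ) ε, ‖F' t s‖ ≤ C := by
    intro s hs t ht
    set x := g s + t • q s with hxdef
    have hxpos : 0 < ‖x‖ := lt_of_lt_of_le hm2 (hxlow s hs t ht)
    have hA : (inner ℝ x x : ℝ) ^ (p/2 - 1) = ‖x‖ ^ (p - 2) := hfun2 x
    have hI : |(inner ℝ x (q s) : ℝ)| ≤ ‖x‖ * M :=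
      le_trans (abs_real_inner_le_norm _ _)
        (mul_le_mul_of_nonneg_left (hmaxq s hs) (norm_nonneg _))
    have hApos : (0:ℝ) ≤ ‖x‖ ^ (p - 2) := Real.rpow_nonneg (norm_nonneg _) _
    have hstep : ‖x‖ ^ (p - 2) * ‖x‖ = ‖x‖ ^ (p - 1) := by
      rw [← Real.rpow_add_one hxpos.ne' (p - 2)]
      ring_nf
    calc ‖F' t s‖ = p * (‖x‖ ^ (p - 2)) * |(inner ℝ x (q s) : ℝ)| := by
            rw [hF'def]
            simp only [← hxdef, hA, Real.norm_eq_abs, abs_mul, abs_of_nonneg hp.le,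
              abs_of_nonneg hApos]
        _ ≤ p * (‖x‖ ^ (p - 2)) * (‖x‖ * M) := by
            apply mul_le_mul_of_nonneg_left hI (by positivity)
        _ = p * (‖x‖ ^ (p - 1)) * M := by rw [← hstep]; ring
        _ ≤ C := by
            rw [hCdef]
            have := hrb ‖x‖ (hxlow s hs t ht) (hxhigh s hs t ht)
            exact mul_le_mul_of_nonneg_right (mul_le_mul_of_nonneg_left this hp.le) hM0
  -- assemble via differentiation under the integral sign
  have hΙ : uIoc a b ⊆ Icc a b := by rw [uIoc_of_le hab.le]; exact Ioc_subset_Icc_self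
  have hF_meas : ∀ᶠ t in nhds (0:ℝ), AEStronglyMeasurable
      (fun s => ‖g s + t • q s‖ ^ p) (volume.restrict (uIoc a b)) :=
    Filter.Eventually.of_forall fun t =>
      ((((hgc.continuous.add (hqc.continuous.const_smul t)).norm).rpow_const
        (fun s => Or.inr hp.le))).aestronglyMeasurable.restrict
  have hF_int : IntervalIntegrable (fun s => ‖g s + (0:ℝ) • q s‖ ^ p) volume a b :=
    ((((hgc.continuous.add (hqc.continuous.const_smul (0:ℝ))).norm).rpow_const
      (fun s => Or.inr hp.le))).intervalIntegrable a b
  have hF'_meas : AEStronglyMeasurable (F' 0) (volume.restrict (uIoc a b)) := by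
    rw [hF'def]
    refine Measurable.aestronglyMeasurable ?_
    have hx0 : Continuous fun s => g s + (0:ℝ) • q s :=
      hgc.continuous.add (hqc.continuous.const_smul (0:ℝ))
    exact (measurable_const.mul
        (((Continuous.inner (𝕜 := ℝ) hx0 hx0).measurable).pow measurable_const)).mul
      (Continuous.inner (𝕜 := ℝ) hx0 hqc.continuous).measurable
  have hmain := (intervalIntegral.hasDerivAt_integral_of_dominated_loc_of_deriv_le
    (F := fun t s => ‖g s + t • q s‖ ^ p) (F' := F') (x₀ := (0:ℝ)) (bound := fun _ => C)
    (ball_mem_nhds (0:ℝ) hε) hF_meas hF_int hF'_meas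
    (MeasureTheory.ae_of_all _ (fun s hs t ht => hbound s (hΙ hs) t ht))
    intervalIntegrable_const
    (MeasureTheory.ae_of_all _ (fun s hs t ht => hdiff s (hΙ hs) t ht))).2
  have hEq : F' 0 = fun s => p * (inner ℝ (w s) (q s) : ℝ) := by
    funext s
    rw [hF'def, hw]
    simp only [zero_smul, add_zero]
    rw [hfun2, real_inner_smul_left]
    ring
  have hder := hmain.const_mul (1/p)
  refine hder.congr_deriv ?_
  rw [hEq, intervalIntegral.integral_const_mul, ← partB]
  field_simp
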